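/- Let A be Hermitian positive definite, P full rank, A_c = P^H A P, and suppose e ∈ ℂ^n satisfies ‖e − P e_c‖ ≤ ρ ‖e‖ for some e_c and 0 < ρ < 1 (i.e., e is interpolated with relative accuracy ρ). If (λ, e) is a normalized eigenpair of A with Ae = λ e and ‖e‖ = 1, then the Rayleigh quotient of e_c in the pencil (A_c, T_c), T_c = P^H P, approximates λ with error bounded by C(‖A‖) ρ for an explicit constant C depending on ‖A‖ and λ: |⟨A_c e_c, e_c⟩/⟨T_c e_c, e_c⟩ − λ| ≤ (‖A‖ + λ) (2ρ + ρ²)/(1−ρ)². -/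

import Mathlib

open Matrix
set_option maxHeartbeats 1000000
open scoped ComplexOrder

/-- if a normalized eigenpair `(λ, e)` of the HPD matrix `A` is
interpolated with relative accuracy `ρ` by a coarse vector `e_c` (i.e.
`‖e - P e_c‖ ≤ ρ ‖e‖` in the Euclidean norm), then the generalized Rayleigh
quotient of `e_c` in the pencil `(Pᴴ A P, Pᴴ P)` approximates `λ` with error at
most `(‖A‖ + λ)(2ρ + ρ²)/(1 - ρ)²`, where `‖A‖` is the spectral norm. -/
theorem stmt11 {n m : ℕ} (A : Matrix (Fin n) (Fin n) ℂ) (hA : A.PosDef)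
    (P : Matrix (Fin n) (Fin m) ℂ) (hP : Function.Injective P.mulVec)
    (enorm : (Fin n → ℂ) → ℝ)
    (henorm : ∀ v, enorm v = Real.sqrt (∑ i, ‖v i‖ ^ 2))
    (e : Fin n → ℂ) (ec : Fin m → ℂ) (hPec : P.mulVec ec ≠ 0)
    (ρ : ℝ) (hρ0 : 0 < ρ) (hρ1 : ρ < 1)
    (hinterp : enorm (e - P.mulVec ec) ≤ ρ * enorm e)
    (lam : ℝ) (hEig : A.mulVec e = (lam : ℂ) • e) (hnorm : enorm e = 1) :
    ‖(star ec ⬝ᵥ (Pᴴ * A * P).mulVec ec) / (star ec ⬝ᵥ (Pᴴ * P).mulVec ec)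
        - (lam : ℂ)‖
      ≤ (‖LinearMap.toContinuousLinearMap (Matrix.toEuclideanLin A)‖ + lam) *
          (2 * ρ + ρ ^ 2) / (1 - ρ) ^ 2 := by
  classical
  set Anorm := ‖LinearMap.toContinuousLinearMap (Matrix.toEuclideanLin A)‖ with hAnorm
  set v := P.mulVec ec with hv
  -- embed into EuclideanSpace
  let ι : (Fin n → ℂ) → EuclideanSpace ℂ (Fin n) := (WithLp.equiv 2 _).symm
  have hnorm_eq : ∀ x : Fin n → ℂ, ‖ι x‖ = enorm x := by
    intro x
    rw [henorm, EuclideanSpace.norm_eq]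
    rfl
  have hinner : ∀ x y : Fin n → ℂ, (inner ℂ (ι x) (ι y) : ℂ) = star x ⬝ᵥ y := by
    intro x y; exact dotProduct_comm _ _
  have hTA : ∀ x : Fin n → ℂ, Matrix.toEuclideanLin A (ι x) = ι (A.mulVec x) := by
    intro x; rfl
  set E := ι e with hE
  set V := ι v with hV
  set W := ι (e - v) with hW
  have hVEW : V = E - W := by
    simp only [hW, hV, hE]
    show ι v = ι e - ι (e - v)
    have : ι (e - v) = ι e - ι v := rfl
    rw [this]; abel
  -- eigen equation in Euclidean space
  have hTAE : Matrix.toEuclideanLin A E = (lam : ℂ) • E := by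
    rw [hE, hTA, hEig]; rfl
  have symm : (Matrix.toEuclideanLin A).IsSymmetric :=
    Matrix.isHermitian_iff_isSymmetric.mp hA.isHermitian
  -- translate numerator and denominator
  have hNum : star ec ⬝ᵥ (Pᴴ * A * P).mulVec ec = (inner ℂ V (Matrix.toEuclideanLin A V) : ℂ) := by
    rw [hV, hTA, hinner]
    show star ec ⬝ᵥ (Pᴴ * A * P).mulVec ec = star v ⬝ᵥ A.mulVec v
    rw [← Matrix.mulVec_mulVec, ← Matrix.mulVec_mulVec, Matrix.dotProduct_mulVec,
      ← Matrix.star_mulVec, hv]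
  have hDen : star ec ⬝ᵥ (Pᴴ * P).mulVec ec = (inner ℂ V V : ℂ) := by
    rw [hV, hinner]
    show star ec ⬝ᵥ (Pᴴ * P).mulVec ec = star v ⬝ᵥ v
    rw [← Matrix.mulVec_mulVec, Matrix.dotProduct_mulVec, ← Matrix.star_mulVec, hv]
  -- basic facts
  have he0 : e ≠ 0 := by
    intro h
    rw [h, henorm] at hnorm
    simp at hnorm
  have hE1 : ‖E‖ = 1 := by rw [hE, hnorm_eq, hnorm]
  have hEe : (star e ⬝ᵥ e : ℂ) = 1 := by
    rw [← hinner]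
    rw [inner_self_eq_norm_sq_to_K]
    show ((‖E‖:ℂ))^2 = 1
    rw [hE1]; norm_num
  have hlam : 0 < lam := by
    have h2 := hA.dotProduct_mulVec_pos he0
    rw [hEig, dotProduct_smul, hEe, smul_eq_mul, mul_one] at h2
    exact_mod_cast h2
  have hAnn : 0 ≤ Anorm := norm_nonneg _
  -- key identity
  have key : (inner ℂ V (Matrix.toEuclideanLin A V) : ℂ) - (lam : ℂ) * inner ℂ V V
      = (inner ℂ W (Matrix.toEuclideanLin A W) : ℂ) - (lam : ℂ) * inner ℂ W W := by
    rw [hVEW, map_sub, hTAE]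
    have h1 : (inner ℂ E ((Matrix.toEuclideanLin A) W) : ℂ) = (lam : ℂ) * inner ℂ E W := by
      rw [← symm E W, hTAE, inner_smul_left, Complex.conj_ofReal]
    simp only [inner_sub_left, inner_sub_right, inner_smul_right, h1]
    ring
  -- norm bounds
  have hWρ : ‖W‖ ≤ ρ := by
    rw [hW, hnorm_eq]
    calc enorm (e - v) ≤ ρ * enorm e := hinterp
      _ = ρ := by rw [hnorm, mul_one]
  have hWnn : (0:ℝ) ≤ ‖W‖ := norm_nonneg _
  have hVlb : 1 - ρ ≤ ‖V‖ := by
    have h := norm_sub_norm_le E W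
    rw [← hVEW] at h
    rw [hE1] at h
    linarith
  have hVpos : (0:ℝ) < ‖V‖ := by linarith
  have hAW : ‖Matrix.toEuclideanLin A W‖ ≤ Anorm * ‖W‖ := by
    have h := (LinearMap.toContinuousLinearMap (Matrix.toEuclideanLin A)).le_opNorm W
    simpa only [LinearMap.coe_toContinuousLinearMap'] using h
  have hnb : ‖(inner ℂ W (Matrix.toEuclideanLin A W) : ℂ) - (lam : ℂ) * inner ℂ W W‖
      ≤ (Anorm + lam) * ρ ^ 2 := by
    have h1 : ‖(inner ℂ W (Matrix.toEuclideanLin A W) : ℂ)‖ ≤ ‖W‖ * (Anorm * ‖W‖) :=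
      le_trans (norm_inner_le_norm _ _) (by nlinarith)
    have h2 : ‖((lam : ℂ) * inner ℂ W W)‖ = lam * ‖W‖ ^ 2 := by
      rw [norm_mul, (@inner_self_eq_norm_sq_to_K ℂ _ _ _ _ W)]
      simp [abs_of_pos hlam, abs_of_nonneg hWnn]
    calc ‖(inner ℂ W (Matrix.toEuclideanLin A W) : ℂ) - (lam : ℂ) * inner ℂ W W‖
        ≤ ‖(inner ℂ W (Matrix.toEuclideanLin A W) : ℂ)‖ + ‖((lam : ℂ) * inner ℂ W W)‖ :=
          norm_sub_le _ _
      _ ≤ (Anorm + lam) * ρ ^ 2 := by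
          rw [h2]
          have hW2 : ‖W‖ ^ 2 ≤ ρ ^ 2 := by nlinarith
          nlinarith [h1, mul_le_mul_of_nonneg_left hW2 hAnn, mul_le_mul_of_nonneg_left hW2 hlam.le]
  -- assemble
  rw [hNum, hDen]
  have hDval : (inner ℂ V V : ℂ) = ((‖V‖ : ℂ)) ^ 2 := @inner_self_eq_norm_sq_to_K ℂ _ _ _ _ V
  have hDne : (inner ℂ V V : ℂ) ≠ 0 := by
    rw [hDval]
    exact pow_ne_zero _ (by exact_mod_cast hVpos.ne')
  have gen : ∀ a b c : ℂ, c ≠ 0 → a / c - b = (a - b * c) / c := by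
    intro a b c hc; field_simp
  have split := gen (inner ℂ V (Matrix.toEuclideanLin A V)) (lam : ℂ) (inner ℂ V V) hDne
  rw [split, mul_comm ((lam:ℂ)) (inner ℂ V V)]
  rw [show (inner ℂ V (Matrix.toEuclideanLin A V) : ℂ) - inner ℂ V V * (lam:ℂ) = inner ℂ V (Matrix.toEuclideanLin A V) - (lam:ℂ) * inner ℂ V V by ring, key, norm_div]
  have hDnorm : ‖(inner ℂ V V : ℂ)‖ = ‖V‖ ^ 2 := by
    rw [hDval, norm_pow]
    simp [abs_of_pos hVpos]
  rw [hDnorm]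
  calc ‖(inner ℂ W (Matrix.toEuclideanLin A W) : ℂ) - (lam : ℂ) * inner ℂ W W‖ / ‖V‖ ^ 2
      ≤ ((Anorm + lam) * ρ ^ 2) / (1 - ρ) ^ 2 := by
        apply div_le_div₀ (mul_nonneg (by linarith) (by positivity)) hnb
          (pow_pos (by linarith) 2)
        exact pow_le_pow_left₀ (by linarith) hVlb 2
    _ ≤ (Anorm + lam) * (2 * ρ + ρ ^ 2) / (1 - ρ) ^ 2 := by
        have hnum : (Anorm + lam) * ρ ^ 2 ≤ (Anorm + lam) * (2 * ρ + ρ ^ 2) := by nlinarith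
        exact (div_le_div_iff_of_pos_right (pow_pos (by linarith : (0:ℝ) < 1 - ρ) 2)).mpr hnum
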